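/- Let T > 0, let (Ω, 𝓕, P) be a probability space, and let 𝓖 = (𝓖_t) and 𝓗 = (𝓗_t) be filtrations on [0,T] with 𝓖_t ⊆ 𝓗_t for every t. Let Z : [0,T] × Ω → ℝ be an 𝓗-martingale, and let A : [0,T] × Ω → ℝ be jointly measurable and 𝓗-adapted with ∫₀^T E[|A_u|] du < ∞. Define Y_t := ∫₀^t A_u du + Z_t. Assume that Y is 𝓖-adapted and that for almost every u ∈ [0,T] one has E[A_u | 𝓖_u] = 0 almost surely. Then Y is a 𝓖-martingale. -/

import Mathlib

open MeasureTheory Set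

/-- Inconspicuousness (Proposition 3.1, key direction): if `Z` is an `ℋ`-martingale on
`[0,T]`, `A` is jointly measurable, `ℋ`-adapted with finite expected absolute integral,
`Y t = ∫₀^t A_u du + Z t` is `𝒢`-adapted where `𝒢 ⊆ ℋ`, and for a.e. `u ∈ [0,T]` the
conditional expectation of `A u` given `𝒢 u` vanishes, then `Y` is a `𝒢`-martingale
on `[0,T]`. -/
theorem inconspicuous_strategy_yields_martingale
    {Ω : Type*} {m0 : MeasurableSpace Ω} {P : Measure Ω} [IsProbabilityMeasure P]
    (T : ℝ) (hT : 0 < T)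
    (𝒢 ℋ : Filtration ℝ m0) (hle : ∀ t, 𝒢 t ≤ ℋ t)
    (Z A : ℝ → Ω → ℝ)
    -- Z is an ℋ-martingale on [0,T]
    (hZ_adapted : ∀ t ∈ Icc (0:ℝ) T, StronglyMeasurable[ℋ t] (Z t))
    (hZ_int : ∀ t ∈ Icc (0:ℝ) T, Integrable (Z t) P)
    (hZ_mart : ∀ s ∈ Icc (0:ℝ) T, ∀ t ∈ Icc (0:ℝ) T, s ≤ t →
      P[Z t | ℋ s] =ᵐ[P] Z s)
    -- A is jointly measurable and ℋ-adapted with ∫₀ᵀ E|A_u| du < ∞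
    (hA_meas : Measurable (Function.uncurry A))
    (hA_adapted : ∀ t ∈ Icc (0:ℝ) T, StronglyMeasurable[ℋ t] (A t))
    (hA_int : ∫⁻ u in Icc (0:ℝ) T, ∫⁻ ω, ‖A u ω‖₊ ∂P < ⊤)
    -- Y_t = ∫₀^t A_u du + Z_t
    (Y : ℝ → Ω → ℝ)
    (hY_def : ∀ t ∈ Icc (0:ℝ) T, ∀ ω, Y t ω = (∫ u in Ioc (0:ℝ) t, A u ω) + Z t ω)
    -- Y is 𝒢-adapted
    (hY_adapted : ∀ t ∈ Icc (0:ℝ) T, StronglyMeasurable[𝒢 t] (Y t))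
    -- for a.e. u ∈ [0,T], E[A_u | 𝒢_u] = 0 a.s.
    (hA_cond : ∀ᵐ u ∂(volume.restrict (Icc (0:ℝ) T)), P[A u | 𝒢 u] =ᵐ[P] 0) :
    (∀ t ∈ Icc (0:ℝ) T, Integrable (Y t) P) ∧
      ∀ s ∈ Icc (0:ℝ) T, ∀ t ∈ Icc (0:ℝ) T, s ≤ t → P[Y t | 𝒢 s] =ᵐ[P] Y s := by
  -- product integrability
  have hA_prod : Integrable (Function.uncurry A)
      ((volume.restrict (Icc (0:ℝ) T)).prod P) := by
    refine ⟨hA_meas.stronglyMeasurable.aestronglyMeasurable, ?_⟩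
    rw [HasFiniteIntegral, lintegral_prod _ hA_meas.enorm.aemeasurable]
    exact hA_int
  have hA_sub : ∀ S : Set ℝ, MeasurableSet S → S ⊆ Icc (0:ℝ) T →
      Integrable (Function.uncurry A) ((volume.restrict S).prod P) := by
    intro S hSm hS
    have h1 : (volume.restrict S : Measure ℝ)
        = (volume.restrict (Icc (0:ℝ) T)).restrict S := by
      rw [Measure.restrict_restrict hSm, Set.inter_eq_self_of_subset_left hS]
    rw [h1]
    conv_rhs => rw [show P = P.restrict Set.univ from (Measure.restrict_univ).symm]
    rw [Measure.prod_restrict]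
    exact hA_prod.integrableOn
  -- integrability of the averaged part
  have hW : ∀ a b : ℝ, Ioc a b ⊆ Icc (0:ℝ) T →
      Integrable (fun ω => ∫ u in Ioc a b, A u ω) P := by
    intro a b hab
    exact (hA_sub _ measurableSet_Ioc hab).integral_prod_right
  have hInt : ∀ t ∈ Icc (0:ℝ) T, Integrable (Y t) P := by
    intro t ht
    have hsub : Ioc (0:ℝ) t ⊆ Icc (0:ℝ) T :=
      Ioc_subset_Icc_self.trans (Icc_subset_Icc_right ht.2)
    exact ((hW 0 t hsub).add (hZ_int t ht)).congr
      (Filter.Eventually.of_forall fun ω => (hY_def t ht ω).symm)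
  refine ⟨hInt, ?_⟩
  intro s hs t ht hst
  have hsub0s : Ioc (0:ℝ) s ⊆ Icc (0:ℝ) T :=
    Ioc_subset_Icc_self.trans (Icc_subset_Icc_right hs.2)
  have hsub0t : Ioc (0:ℝ) t ⊆ Icc (0:ℝ) T :=
    Ioc_subset_Icc_self.trans (Icc_subset_Icc_right ht.2)
  have hsubst : Ioc s t ⊆ Icc (0:ℝ) T := fun u hu =>
    ⟨le_trans hs.1 hu.1.le, le_trans hu.2 ht.2⟩
  have hW_int : Integrable (fun ω => ∫ u in Ioc s t, A u ω) P := hW s t hsubst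
  -- a.e. decomposition  Y t = Y s + W + (Z t - Z s)
  have hdecomp : Y t =ᵐ[P] Y s + (fun ω => ∫ u in Ioc s t, A u ω) + (Z t - Z s) := by
    have hae : ∀ᵐ ω ∂P, Integrable (fun u => A u ω)
        (volume.restrict (Icc (0:ℝ) T)) := hA_prod.swap.prod_right_ae
    filter_upwards [hae] with ω hω
    have hres : ∀ S : Set ℝ, MeasurableSet S → S ⊆ Icc (0:ℝ) T →
        IntegrableOn (fun u => A u ω) S volume := by
      intro S hSm hS
      have h2 : Integrable (fun u => A u ω)
          ((volume.restrict (Icc (0:ℝ) T)).restrict S) := hω.integrableOn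
      rwa [Measure.restrict_restrict hSm, Set.inter_eq_self_of_subset_left hS] at h2
    have key : (∫ u in Ioc (0:ℝ) t, A u ω)
        = (∫ u in Ioc (0:ℝ) s, A u ω) + ∫ u in Ioc s t, A u ω := by
      rw [← Ioc_union_Ioc_eq_Ioc hs.1 hst,
        setIntegral_union (Ioc_disjoint_Ioc_of_le le_rfl) measurableSet_Ioc
          (hres _ measurableSet_Ioc hsub0s) (hres _ measurableSet_Ioc hsubst)]
    simp only [Pi.add_apply, Pi.sub_apply]
    rw [hY_def t ht ω, hY_def s hs ω, key]
    ring
  -- conditional expectation of W is 0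
  have hW0 : P[(fun ω => ∫ u in Ioc s t, A u ω) | 𝒢 s] =ᵐ[P] 0 := by
    refine (ae_eq_condExp_of_forall_setIntegral_eq (𝒢.le s) hW_int
      (fun B _ _ => (integrable_zero _ _ _).integrableOn)
      (fun B hB _ => ?_)
      (stronglyMeasurable_zero.aestronglyMeasurable)).symm
    have hBm : MeasurableSet B := 𝒢.le s _ hB
    -- Fubini on (Ioc s t) × B
    have hmeq : (volume.restrict (Ioc s t)).prod (P.restrict B)
        = ((volume.restrict (Ioc s t)).prod P).restrict (Set.univ ×ˢ B) := by
      rw [← Measure.prod_restrict, Measure.restrict_univ]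
    have hprodB : Integrable (Function.uncurry A)
        ((volume.restrict (Ioc s t)).prod (P.restrict B)) := by
      rw [hmeq]
      exact (hA_sub _ measurableSet_Ioc hsubst).integrableOn
    have hswap : (∫ u in Ioc s t, ∫ ω in B, A u ω ∂P)
        = ∫ ω in B, (∫ u in Ioc s t, A u ω) ∂P :=
      integral_integral_swap hprodB
    have hinner : ∀ᵐ u ∂(volume.restrict (Ioc s t)), (∫ ω in B, A u ω ∂P) = 0 := by
      have hcond := ae_restrict_of_ae_restrict_of_subset hsubst hA_cond
      have hint : ∀ᵐ u ∂(volume.restrict (Ioc s t)), Integrable (A u) P :=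
        (hA_sub _ measurableSet_Ioc hsubst).prod_right_ae
      filter_upwards [hcond, hint, ae_restrict_mem measurableSet_Ioc]
        with u hcu hiu hu
      have hBu : MeasurableSet[𝒢 u] B := 𝒢.mono hu.1.le _ hB
      rw [← setIntegral_condExp (𝒢.le u) hiu hBu]
      calc ∫ ω in B, (P[A u|𝒢 u]) ω ∂P = ∫ ω in B, (0:ℝ) ∂P :=
            integral_congr_ae (ae_restrict_of_ae hcu)
        _ = 0 := by simp
    have hzero : (∫ u in Ioc s t, ∫ ω in B, A u ω ∂P) = 0 :=
      integral_eq_zero_of_ae hinner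
    have hBW : (∫ ω in B, (∫ u in Ioc s t, A u ω) ∂P) = 0 := by
      rw [← hswap]; exact hzero
    simp only [Pi.zero_apply, integral_zero]
    exact hBW.symm
  -- conditional expectation of Z t - Z s is 0
  have hZ0 : P[Z t - Z s | 𝒢 s] =ᵐ[P] 0 := by
    have h1 : P[Z t - Z s | ℋ s] =ᵐ[P] 0 := by
      have h2 := condExp_sub (m := ℋ s) (μ := P) (hZ_int t ht) (hZ_int s hs)
      have h3 : P[Z s | ℋ s] = Z s :=
        condExp_of_stronglyMeasurable (ℋ.le s) (hZ_adapted s hs) (hZ_int s hs)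
      filter_upwards [h2, hZ_mart s hs t ht hst] with ω e2 e3
      simp only [Pi.sub_apply, Pi.zero_apply] at *
      rw [e2, e3, h3]; ring
    calc P[Z t - Z s | 𝒢 s]
        =ᵐ[P] P[P[Z t - Z s | ℋ s] | 𝒢 s] :=
          (condExp_condExp_of_le (hle s) (ℋ.le s)).symm
      _ =ᵐ[P] P[(0 : Ω → ℝ) | 𝒢 s] := condExp_congr_ae h1
      _ = 0 := condExp_zero
  -- combine
  have hYs : P[Y s | 𝒢 s] = Y s :=
    condExp_of_stronglyMeasurable (𝒢.le s) (hY_adapted s hs) (hInt s hs)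
  calc P[Y t | 𝒢 s]
      =ᵐ[P] P[Y s + (fun ω => ∫ u in Ioc s t, A u ω) + (Z t - Z s) | 𝒢 s] := condExp_congr_ae hdecomp
    _ =ᵐ[P] P[Y s + (fun ω => ∫ u in Ioc s t, A u ω) | 𝒢 s] + P[Z t - Z s | 𝒢 s] :=
        condExp_add ((hInt s hs).add hW_int) ((hZ_int t ht).sub (hZ_int s hs)) _
    _ =ᵐ[P] (P[Y s | 𝒢 s] + P[(fun ω => ∫ u in Ioc s t, A u ω) | 𝒢 s]) + P[Z t - Z s | 𝒢 s] := by
        filter_upwards [condExp_add (m := 𝒢 s) (hInt s hs) hW_int] with ω e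
        simp [e]
    _ =ᵐ[P] Y s := by
        filter_upwards [hW0, hZ0] with ω e1 e2
        simp only [Pi.add_apply, Pi.zero_apply] at *
        rw [hYs, e1, e2]; ring
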